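/- arXiv:1401.5711 — 2 statements merged into one kernel-verified Lean document; each statement's English description precedes it below -/
import Mathlib

section
/- The centralizer of any nontrivial element of a free group is an infinite cyclic group. -/
open FreeGroup List

variable {X : Type*}

/-- no-cancellation predicate -/
def NC (a b : X × Bool) : Prop := ¬(b.1 = a.1 ∧ b.2 = !a.2)

lemma chain'_reduce [DecidableEq X] (L : List (X × Bool)) : List.Chain' NC (FreeGroup.reduce L) := by
  induction L with
  | nil => simp [List.Chain']
  | cons x L ih =>
    rw [FreeGroup.reduce.cons]
    rcases h : FreeGroup.reduce L with _ | ⟨hd, tl⟩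
    · simp [List.Chain']
    · rw [h] at ih
      dsimp only
      split_ifs with hc
      · exact ih.tail
      · exact List.isChain_cons_cons.2 ⟨fun h' => hc ⟨h'.1.symm, by rw [h'.2, Bool.not_not]⟩, ih⟩

lemma reduce_eq_self_of_chain [DecidableEq X] {L : List (X × Bool)} (h : List.Chain' NC L) :
    FreeGroup.reduce L = L := by
  induction L with
  | nil => rfl
  | cons x L ih =>
    rw [FreeGroup.reduce.cons, ih h.tail]
    rcases L with _ | ⟨hd, tl⟩
    · rfl
    · dsimp only
      rw [if_neg]
      intro hc
      exact (List.isChain_cons_cons.1 h).1 ⟨hc.1.symm, by rw [hc.2, Bool.not_not]⟩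

lemma chain'_toWord [DecidableEq X] (z : FreeGroup X) : List.Chain' NC z.toWord := by
  rw [← FreeGroup.reduce_toWord]
  exact chain'_reduce _

lemma mk_append_cancel [DecidableEq X] (w : List (X × Bool)) (c : X) (b : Bool) :
    FreeGroup.mk (w ++ [(c, b), (c, !b)]) = FreeGroup.mk w := by
  have := Quot.sound (FreeGroup.Red.Step.not (L₁ := w) (L₂ := []) (x := c) (b := b))
  simp [FreeGroup.quot_mk_eq_mk] at this; exact this

lemma key_aux [DecidableEq X] (u : X) :
    ∀ (N : ℕ) (z : FreeGroup X), z.toWord.length ≤ N → z * FreeGroup.of u = FreeGroup.of u * z →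
      ∃ n : ℤ, z = FreeGroup.of u ^ n := by
  intro N
  induction N with
  | zero =>
    intro z hlen _
    refine ⟨0, ?_⟩
    rw [zpow_zero, ← FreeGroup.toWord_eq_nil_iff]
    exact List.eq_nil_of_length_eq_zero (Nat.le_zero.1 hlen)
  | succ N ih =>
    intro z hlen hcomm
    rcases List.eq_nil_or_concat z.toWord with hw | ⟨w', ⟨c, s⟩, hw⟩
    · exact ⟨0, by rw [zpow_zero, ← FreeGroup.toWord_eq_nil_iff, hw]⟩
    rw [List.concat_eq_append] at hw
    have hz : z = FreeGroup.mk (w' ++ [(c, s)]) := by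
      conv_lhs => rw [← FreeGroup.mk_toWord (x := z)]
      rw [hw]
    have hchain : List.Chain' NC (w' ++ [(c, s)]) := by rw [← hw]; exact chain'_toWord z
    have hred' : FreeGroup.reduce w' = w' :=
      reduce_eq_self_of_chain (hchain.prefix ⟨[(c, s)], rfl⟩)
    have hlenw : w'.length + 1 ≤ N + 1 := by
      have := congrArg List.length hw; simp at this; omega
    by_cases hc : c = u
    · subst hc
      set z' := FreeGroup.mk w' with hz'
      have hlen' : z'.toWord.length ≤ N := by
        rw [hz', FreeGroup.toWord_mk, hred']; omega
      cases s
      · have hzeq : z = z' * (FreeGroup.of c)⁻¹ := by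
          rw [hz', FreeGroup.of, FreeGroup.inv_mk, FreeGroup.mul_mk, hz]
          congr 1
        have hz'' : z' = z * FreeGroup.of c := by rw [hzeq]; group
        have hcomm' : z' * FreeGroup.of c = FreeGroup.of c * z' := by
          rw [hz'', ← mul_assoc, ← hcomm]
        obtain ⟨n, hn⟩ := ih z' hlen' hcomm'
        exact ⟨n - 1, by rw [hzeq, hn, ← zpow_sub_one]⟩
      · have hzeq : z = z' * FreeGroup.of c := by
          rw [hz', FreeGroup.of, FreeGroup.mul_mk, hz]
        have hz'' : z' = z * (FreeGroup.of c)⁻¹ := by rw [hzeq]; group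
        have hcomm' : z' * FreeGroup.of c = FreeGroup.of c * z' := by
          rw [hz'']
          have : FreeGroup.of c * (z * (FreeGroup.of c)⁻¹) = z := by
            rw [← mul_assoc, ← hcomm]; group
          rw [this]; group
        obtain ⟨n, hn⟩ := ih z' hlen' hcomm'
        exact ⟨n + 1, by rw [hzeq, hn, ← zpow_add_one]⟩
    · exfalso
      have e1 : z * FreeGroup.of u = FreeGroup.mk (z.toWord ++ [(u, true)]) := by
        conv_lhs => rw [← FreeGroup.mk_toWord (x := z)]
        rw [FreeGroup.of, FreeGroup.mul_mk]
      have h1 : (z * FreeGroup.of u).toWord = z.toWord ++ [(u, true)] := by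
        rw [e1, FreeGroup.toWord_mk]
        apply reduce_eq_self_of_chain
        unfold List.Chain'; rw [List.isChain_append]
        refine ⟨chain'_toWord z, List.isChain_singleton _, ?_⟩
        intro x hx y hy
        rw [hw, List.getLast?_concat] at hx
        simp at hx hy
        subst hx; subst hy
        exact fun hcon => hc hcon.1.symm
      have e2 : FreeGroup.of u * z = FreeGroup.mk ((u, true) :: z.toWord) := by
        conv_lhs => rw [← FreeGroup.mk_toWord (x := z)]
        rw [FreeGroup.of, FreeGroup.mul_mk]
        rfl
      have h2 : (FreeGroup.of u * z).toWord = FreeGroup.reduce ((u, true) :: z.toWord) := by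
        rw [e2, FreeGroup.toWord_mk]
      rw [hcomm] at h1
      rw [h1, FreeGroup.reduce.cons, FreeGroup.reduce_toWord] at h2
      rcases hwl : z.toWord with _ | ⟨hd, tl⟩
      · rw [hwl] at hw; simp at hw
      · rw [hwl] at h2
        dsimp only at h2
        split_ifs at h2 with hcancel
        · rw [← hwl] at h2
          have h3 := congrArg List.length h2
          have h4 := congrArg List.length hwl
          simp at h3 h4
          omega
        · rw [← hwl] at h2
          have h3 := congrArg List.getLast? h2
          rw [List.getLast?_concat, hw, ← List.cons_append, List.getLast?_concat] at h3
          have h4 : ((u, true) : X × Bool) = (c, s) := Option.some_injective _ h3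
          exact hc (congrArg Prod.fst h4).symm

lemma eq_one_of_commutes_two {X : Type*} {u v : X} (huv : u ≠ v) (z : FreeGroup X)
    (hu : z * FreeGroup.of u = FreeGroup.of u * z)
    (hv : z * FreeGroup.of v = FreeGroup.of v * z) : z = 1 := by
  classical
  obtain ⟨m, hm⟩ := key_aux u _ z le_rfl hu
  obtain ⟨n, hn⟩ := key_aux v _ z le_rfl hv
  let φ : FreeGroup X →* Multiplicative ℤ :=
    FreeGroup.lift (fun x => if x = u then Multiplicative.ofAdd (1 : ℤ) else 1)
  have h1 : φ z = Multiplicative.ofAdd m := by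
    rw [hm, map_zpow, FreeGroup.lift_apply_of, if_pos rfl]
    simp [← ofAdd_zsmul]
  have h2 : φ z = 1 := by
    rw [hn, map_zpow, FreeGroup.lift_apply_of, if_neg (Ne.symm huv), one_zpow]
  have : m = 0 := by
    have := h1.symm.trans h2
    simpa using this
  rw [hm, this, zpow_zero]

/-- the free group on one generator is `Multiplicative ℤ` -/
noncomputable def freeGroupUnitMulEquivInt : FreeGroup Unit ≃* Multiplicative ℤ := by
  refine MonoidHom.toMulEquiv
    (FreeGroup.lift (fun _ => Multiplicative.ofAdd (1 : ℤ)))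
    (zpowersHom _ (FreeGroup.of ())) ?_ ?_
  · apply FreeGroup.ext_hom
    intro x
    simp
  · apply MonoidHom.ext_mint
    simp

theorem stmt_4 (α : Type) (g : FreeGroup α) (hg : g ≠ 1) :
    Nonempty ((Subgroup.centralizer ({g} : Set (FreeGroup α))) ≃* Multiplicative ℤ) := by
  classical
  set H := Subgroup.centralizer ({g} : Set (FreeGroup α)) with hH
  have hgmem : g ∈ H := Subgroup.mem_centralizer_iff.2 (by rintro y rfl; rfl)
  haveI : IsFreeGroup H := inferInstance
  set X := IsFreeGroup.Generators H with hX
  let e : H ≃* FreeGroup X := IsFreeGroup.toFreeGroup H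
  set z : FreeGroup X := e ⟨g, hgmem⟩ with hz
  have hzne : z ≠ 1 := by
    intro h
    apply hg
    have := e.injective (h.trans (_root_.map_one e).symm)
    exact congrArg Subtype.val this
  have hcomm : ∀ w : FreeGroup X, z * w = w * z := by
    intro w
    set k : H := e.symm w with hk
    have hkH : (k : FreeGroup α) ∈ H := k.2
    have : g * (k : FreeGroup α) = (k : FreeGroup α) * g :=
      Subgroup.mem_centralizer_iff.1 hkH g rfl
    have hhk : (⟨g, hgmem⟩ : H) * k = k * ⟨g, hgmem⟩ := Subtype.ext (by simpa using this)
    have := congrArg e hhk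
    rw [_root_.map_mul, _root_.map_mul] at this
    rw [hz, hk] at *
    simpa using this
  have hsub : Subsingleton X := by
    constructor
    intro u v
    by_contra huv
    exact hzne (eq_one_of_commutes_two huv z (hcomm _) (hcomm _))
  have hne : Nonempty X := by
    rcases hwl : z.toWord with _ | ⟨⟨x, b⟩, tl⟩
    · exact absurd (FreeGroup.toWord_eq_nil_iff.1 hwl) hzne
    · exact ⟨x⟩
  obtain ⟨x⟩ := hne
  haveI : Unique X := ⟨⟨x⟩, fun y => Subsingleton.elim y x⟩
  exact ⟨e.trans ((FreeGroup.freeGroupCongr (Equiv.ofUnique X Unit)).trans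
    freeGroupUnitMulEquivInt)⟩
end

section
/- In the free group F₂ on generators a and b, the commutator [a, b] is not a proper power: there is no element z ∈ F₂ and integer n ≥ 2 with [a, b] = zⁿ. -/
namespace Stmt5Aux

abbrev M3 := Matrix (Fin 3) (Fin 3) ℤ

def U (x y t : ℤ) : M3 := !![1, x, t; 0, 1, y; 0, 0, 1]

lemma U_mul (x y t x' y' t' : ℤ) :
    U x y t * U x' y' t' = U (x + x') (y + y') (t + t' + x * y') := by
  ext i j
  fin_cases i <;> fin_cases j <;>
    simp [U, Matrix.mul_apply, Fin.sum_univ_succ, Matrix.vecHead, Matrix.vecTail] <;> ring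

lemma U_one : U 0 0 0 = 1 := by
  ext i j
  fin_cases i <;> fin_cases j <;> simp [U, Matrix.one_apply, Matrix.vecHead, Matrix.vecTail]

lemma U_inj01 {x y t x' y' t' : ℤ} (h : U x y t = U x' y' t') : x = x' := by
  simpa [U] using congrFun (congrFun h 0) 1

lemma U_inj12 {x y t x' y' t' : ℤ} (h : U x y t = U x' y' t') : y = y' := by
  simpa [U] using congrFun (congrFun h 1) 2

lemma U_inj02 {x y t x' y' t' : ℤ} (h : U x y t = U x' y' t') : t = t' := by
  simpa [U] using congrFun (congrFun h 0) 2

def Uu (x y t : ℤ) : M3ˣ :=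
  ⟨U x y t, U (-x) (-y) (x * y - t),
   by rw [U_mul]; ring_nf; simpa using U_one,
   by rw [U_mul]; ring_nf; simpa using U_one⟩

lemma inH : ∀ g : FreeGroup (Fin 2),
    ∃ x y t : ℤ, ((FreeGroup.lift ![Uu 1 0 0, Uu 0 1 0]) g : M3ˣ).val = U x y t := by
  intro g
  induction g using FreeGroup.induction_on with
  | C1 => exact ⟨0, 0, 0, by simpa using U_one.symm⟩
  | of i =>
      fin_cases i
      · exact ⟨1, 0, 0, congrArg Units.val (FreeGroup.lift_apply_of (x := (0 : Fin 2)))⟩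
      · exact ⟨0, 1, 0, congrArg Units.val (FreeGroup.lift_apply_of (x := (1 : Fin 2)))⟩
  | inv_of i hi =>
      obtain ⟨x, y, t, h⟩ := hi
      refine ⟨-x, -y, x * y - t, ?_⟩
      rw [map_inv]
      refine Units.inv_eq_of_mul_eq_one_right ?_
      rw [h, U_mul]
      ring_nf
      simpa using U_one
  | mul g₁ g₂ h1 h2 =>
      obtain ⟨x, y, t, h1⟩ := h1
      obtain ⟨x', y', t', h2⟩ := h2
      exact ⟨x + x', y + y', t + t' + x * y', by rw [map_mul, Units.val_mul, h1, h2, U_mul]⟩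

lemma U_pow (x y t : ℤ) (n : ℕ) :
    ∃ s : ℤ, (U x y t) ^ n = U (n * x) (n * y) s ∧ (x = 0 → y = 0 → s = n * t) := by
  induction n with
  | zero => exact ⟨0, by simpa using U_one.symm, by simp⟩
  | succ n ih =>
      obtain ⟨s, hs, hst⟩ := ih
      refine ⟨s + t + (n * x) * y, ?_, ?_⟩
      · rw [pow_succ, hs, U_mul]; congr 1 <;> push_cast <;> ring
      · intro hx hy
        rw [hst hx hy, hx, hy]; push_cast; ring

end Stmt5Aux

open Stmt5Aux in
theorem stmt_5 :
    ¬ ∃ (z : FreeGroup (Fin 2)) (n : ℕ), 2 ≤ n ∧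
      FreeGroup.of 0 * FreeGroup.of 1 * (FreeGroup.of 0)⁻¹ * (FreeGroup.of 1)⁻¹ = z ^ n := by
  rintro ⟨z, n, hn, hz⟩
  set φ := FreeGroup.lift ![Uu 1 0 0, Uu 0 1 0]
  have hcomm : (φ (FreeGroup.of 0 * FreeGroup.of 1 * (FreeGroup.of 0)⁻¹ * (FreeGroup.of 1)⁻¹)).val
      = U 0 0 1 := by
    have h0 : φ (FreeGroup.of 0) = Uu 1 0 0 := FreeGroup.lift_apply_of
    have h1 : φ (FreeGroup.of 1) = Uu 0 1 0 := FreeGroup.lift_apply_of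
    have hinv0 : (φ (FreeGroup.of 0))⁻¹.val = U (-1) 0 0 := by rw [h0]; rfl
    have hinv1 : (φ (FreeGroup.of 1))⁻¹.val = U 0 (-1) 0 := by rw [h1]; rfl
    simp only [map_mul, map_inv, Units.val_mul, hinv0, hinv1, h0, h1]
    show U 1 0 0 * U 0 1 0 * U (-1) 0 0 * U 0 (-1) 0 = U 0 0 1
    rw [U_mul, U_mul, U_mul]; norm_num
  obtain ⟨x, y, t, hzU⟩ := inH z
  have hpow : ((φ z) ^ n).val = (U x y t) ^ n := by
    rw [Units.val_pow_eq_pow_val, hzU]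
  have key : (U x y t) ^ n = U 0 0 1 := by
    rw [← hpow, ← map_pow, ← hz, hcomm]
  obtain ⟨s, hs, hst⟩ := U_pow x y t n
  rw [hs] at key
  have hx : x = 0 := by
    have := U_inj01 key
    have hn' : (n : ℤ) ≠ 0 := by exact_mod_cast (by omega : n ≠ 0)
    exact (mul_eq_zero.mp this).resolve_left hn'
  have hy : y = 0 := by
    have := U_inj12 key
    have hn' : (n : ℤ) ≠ 0 := by exact_mod_cast (by omega : n ≠ 0)
    exact (mul_eq_zero.mp this).resolve_left hn'
  have hs1 : (n : ℤ) * t = 1 := by rw [← hst hx hy]; exact U_inj02 key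
  have : (n : ℤ) ≤ 1 := Int.le_of_dvd one_pos ⟨t, hs1.symm⟩
  omega
end
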